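/- arXiv:2003.14181 — 2 statements merged into one kernel-verified Lean document; each statement's English description precedes it below -/
import Mathlib

section
/- Let L = 2·c_max²/|z_s − z_r| and let 0 < λ < λ₀, and suppose β = 0. Then J_WRI^α is constant on the part of [c_min, c_max] outside [c_* − Lλ, c_* + Lλ]: for any c, c' ∈ [c_min, c_max] with |c − c_*| > L·λ and |c' − c_*| > L·λ, J_WRI^α(c) = J_WRI^α(c'). (Theorem 2, case β = 0.) -/
open MeasureTheory Set


section Helpers

lemma cs_sq_integral {μ : Measure ℝ} [IsFiniteMeasure μ] {f : ℝ → ℝ}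
    (hf : Integrable f μ) (hf2 : Integrable (fun x => f x ^ 2) μ) :
    (∫ x, f x ∂μ) ^ 2 ≤ (μ univ).toReal * ∫ x, f x ^ 2 ∂μ := by
  set A := (μ univ).toReal with hA
  have hA0 : 0 ≤ A := ENNReal.toReal_nonneg
  rcases eq_or_lt_of_le hA0 with h0 | hpos
  · have hμ0 : μ univ = 0 := by
      by_contra h
      exact (ENNReal.toReal_ne_zero.mpr ⟨h, measure_ne_top μ univ⟩) (by rw [← hA, ← h0])
    have hμ : μ = 0 := by
      ext s hs
      simp [le_antisymm ((measure_mono (subset_univ s)).trans hμ0.le) zero_le]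
    simp [hμ]
  · have key : 0 ≤ ∫ x, (f x - (∫ y, f y ∂μ) / A) ^ 2 ∂μ := integral_nonneg fun x => sq_nonneg _
    set m := (∫ y, f y ∂μ) / A with hm
    have i1 : Integrable (fun x => f x ^ 2 - 2 * m * f x) μ := hf2.sub (hf.const_mul (2*m))
    have hexp : ∫ x, (f x - m) ^ 2 ∂μ
        = ∫ x, f x ^ 2 ∂μ - 2 * m * ∫ x, f x ∂μ + m ^ 2 * A := by
      have h1 : (fun x => (f x - m) ^ 2) = fun x => (f x ^ 2 - 2 * m * f x) + m ^ 2 := by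
        funext x; ring
      calc ∫ x, (f x - m) ^ 2 ∂μ = ∫ x, (f x ^ 2 - 2 * m * f x) + m ^ 2 ∂μ := by rw [h1]
        _ = (∫ x, f x ^ 2 - 2 * m * f x ∂μ) + ∫ _x, (m^2 : ℝ) ∂μ :=
            integral_add i1 (integrable_const _)
        _ = ((∫ x, f x ^ 2 ∂μ) - ∫ x, 2 * m * f x ∂μ) + ∫ _x, (m^2 : ℝ) ∂μ := by
            rw [integral_sub hf2 (hf.const_mul (2*m))]
        _ = ∫ x, f x ^ 2 ∂μ - 2 * m * ∫ x, f x ∂μ + m ^ 2 * A := by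
            rw [integral_const_mul, integral_const]; simp only [hA, smul_eq_mul, Measure.real]; ring
    rw [hexp] at key
    have hI : m * A = ∫ x, f x ∂μ := by
      rw [hm, div_mul_cancel₀ _ hpos.ne']
    nlinarith [key, sq_nonneg m]

lemma quad_lower {A a2 : ℝ} (hA : 0 < A) (ha : 0 < a2) (y ρ : ℝ) :
    a2 / (a2 + A) * ρ ^ 2 ≤ (ρ - y) ^ 2 + a2 / A * y ^ 2 := by
  have hA' : A ≠ 0 := ne_of_gt hA
  have hs : a2 + A ≠ 0 := by positivity
  rw [div_mul_eq_mul_div, div_le_iff₀ (by positivity)]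
  have h := sq_nonneg ((a2 + A) * y - A * ρ)
  have e : ((ρ - y) ^ 2 + a2 / A * y ^ 2) * (a2 + A)
      = (ρ - y)^2 * (a2 + A) + (a2 * (a2+A) / A) * y ^ 2 := by ring
  rw [e, ← sub_nonneg]
  have e2 : (ρ - y)^2 * (a2 + A) + (a2 * (a2+A) / A) * y ^ 2 - a2 * ρ ^ 2
      = ((a2 + A) * y - A * ρ)^2 / A := by field_simp; ring
  rw [e2]
  positivity

lemma wavelet_sq_integral (w1 : ℝ → ℝ) {lam : ℝ} (τ : ℝ) (hlam : 0 < lam) :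
    ∫ t : ℝ, ((1/Real.sqrt lam) * w1 ((t - τ)/lam))^2 = ∫ t : ℝ, (w1 t)^2 := by
  have hs : (1/Real.sqrt lam)^2 = 1/lam := by
    rw [div_pow, one_pow, Real.sq_sqrt hlam.le]
  have h1 : (fun t => ((1/Real.sqrt lam) * w1 ((t - τ)/lam))^2)
      = fun t => (1/lam) * (fun u => (w1 u)^2) ((t - τ)/lam) := by
    funext t; simp only [mul_pow, hs]
  rw [h1, integral_const_mul]
  have h2 : (fun t : ℝ => (fun u => (w1 u)^2) ((t - τ)/lam))
      = fun t : ℝ => (fun x : ℝ => (fun u => (w1 u)^2) (x/lam)) (t - τ) := rfl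
  rw [h2, integral_sub_right_eq_self (fun x : ℝ => (fun u => (w1 u)^2) (x/lam)) τ,
    MeasureTheory.Measure.integral_comp_div (fun u => (w1 u)^2) lam]
  rw [abs_of_pos hlam, smul_eq_mul]
  field_simp

lemma wavelet_support {w1 : ℝ → ℝ} (hw1s : Function.support w1 ⊆ Ioo 0 1) {lam : ℝ}
    (hlam : 0 < lam) {τ t : ℝ} (h : w1 ((t - τ)/lam) ≠ 0) : τ < t ∧ t < τ + lam := by
  have := hw1s (Function.mem_support.mpr h)
  obtain ⟨h1, h2⟩ := this
  have h1' : 0 < t - τ := by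
    have := (div_pos_iff.mp h1)
    rcases this with ⟨h,_⟩|⟨_,h⟩
    · exact h
    · linarith
  have h2' : t - τ < lam := by
    have := (div_lt_one hlam).mp h2
    linarith
  constructor <;> linarith

lemma integral_eq_of_support_subset_Ioc {f : ℝ → ℝ} {a b : ℝ} (hab : a ≤ b)
    (h : Function.support f ⊆ Ioc a b) : ∫ t in a..b, f t = ∫ t : ℝ, f t := by
  rw [intervalIntegral.integral_of_le hab]
  exact setIntegral_eq_integral_of_forall_compl_eq_zero fun x hx => by
    by_contra hfx; exact hx (h hfx)

end Helpers

set_option maxHeartbeats 2000000 in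
lemma wri_sInf_eq
    (zs zr zmin zmax T cmin cmax cstar lam α : ℝ) (w1 : ℝ → ℝ)
    (hzr : zs ≠ zr) (hz : zmin < zmax) (hT : 0 < T)
    (hcmin : 0 < cmin) (hcc : cmin ≤ cmax)
    (htransit : |zs - zr| / cmin < T)
    (hw1c : Continuous w1) (hw1s : Function.support w1 ⊆ Ioo 0 1)
    (hcstar : cstar ∈ Icc cmin cmax)
    (hlam : 0 < lam) (hlam0 : lam < T - |zs - zr| / cmin)
    (hα : 0 < α)
    (hβ : (zmax - zmin) / cstar^2 - 4 * α^2 = 0)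
    (c : ℝ) (hc : c ∈ Icc cmin cmax)
    (hcw : |c - cstar| > (2 * cmax ^ 2 / |zs - zr|) * lam) :
    sInf { v : ℝ | ∃ g : ℝ → ℝ → ℝ,
        MemLp (fun p : ℝ × ℝ => g p.1 p.2) 2
          ((volume.restrict (Icc zmin zmax)).prod volume) ∧
        v = (1/2) * ((∫ t in (0:ℝ)..T,
              ((1/(2*cstar)) * ((1/Real.sqrt lam) * w1 ((t - |zs - zr| / cstar) / lam))
                - (1/(2*c)) * ((1/Real.sqrt lam) * w1 ((t - |zs - zr| / c) / lam))
                - (1/(2*c)) * ∫ z in zmin..zmax, g z (t - |zr - z| / c)) ^ 2)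
            + α^2 * ∫ z in zmin..zmax, ∫ t : ℝ, (g z t) ^ 2) }
      = 1/(8*cstar^2) * ∫ t : ℝ, (w1 t)^2 := by
  obtain ⟨hc1, hc2⟩ := hc
  obtain ⟨hcs1, hcs2⟩ := hcstar
  have hc0 : 0 < c := lt_of_lt_of_le hcmin hc1
  have hcs0 : 0 < cstar := lt_of_lt_of_le hcmin hcs1
  have hcmax0 : 0 < cmax := lt_of_lt_of_le hcmin hcc
  have hD : 0 < |zs - zr| := abs_pos.mpr (sub_ne_zero.mpr hzr)
  have hZ : 0 < zmax - zmin := sub_pos.mpr hz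
  have hZc : zmax - zmin = 4*α^2*cstar^2 := by
    field_simp at hβ; linarith
  set W := ∫ t : ℝ, (w1 t)^2 with hWdef
  have hW0 : 0 ≤ W := integral_nonneg fun t => sq_nonneg _
  set τs := |zs - zr| / cstar with hτs
  set τc := |zs - zr| / c with hτc
  -- the residual
  set r : ℝ → ℝ := fun t =>
      (1/(2*cstar)) * ((1/Real.sqrt lam) * w1 ((t - τs) / lam))
        - (1/(2*c)) * ((1/Real.sqrt lam) * w1 ((t - τc) / lam)) with hrdef
  -- time windows
  have hτs_pos : 0 < τs := div_pos hD hcs0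
  have hτc_pos : 0 < τc := div_pos hD hc0
  have hτs_T : τs + lam < T := by
    have : τs ≤ |zs - zr| / cmin := by
      apply div_le_div_of_nonneg_left hD.le hcmin hcs1
    linarith
  have hτc_T : τc + lam < T := by
    have : τc ≤ |zs - zr| / cmin := by
      apply div_le_div_of_nonneg_left hD.le hcmin hc1
    linarith
  have hsep : 2 * lam < |τc - τs| := by
    have h1 : |τc - τs| = |zs - zr| * |c - cstar| / (c * cstar) := by
      have he : τc - τs = |zs - zr| * (cstar - c) / (c * cstar) := by
        rw [hτc, hτs]; field_simp
      rw [he, abs_div, abs_mul, abs_of_pos hD, abs_of_pos (mul_pos hc0 hcs0), abs_sub_comm cstar c]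
    have h2 : c * cstar ≤ cmax ^ 2 := by nlinarith
    have h3 : |zs - zr| * |c - cstar| > |zs - zr| * ((2 * cmax ^ 2 / |zs - zr|) * lam) := by
      apply mul_lt_mul_of_pos_left hcw hD
    have h4 : |zs - zr| * ((2 * cmax ^ 2 / |zs - zr|) * lam) = 2 * cmax^2 * lam := by
      field_simp
    rw [h1]
    rw [gt_iff_lt, h4] at h3
    rw [lt_div_iff₀ (mul_pos hc0 hcs0)]
    calc 2 * lam * (c * cstar) ≤ 2 * lam * cmax^2 := by nlinarith
      _ < |zs - zr| * |c - cstar| := by nlinarith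
  -- support facts
  have hsupS : ∀ t, w1 ((t - τs)/lam) ≠ 0 → τs < t ∧ t < τs + lam :=
    fun t h => wavelet_support hw1s hlam h
  have hsupC : ∀ t, w1 ((t - τc)/lam) ≠ 0 → τc < t ∧ t < τc + lam :=
    fun t h => wavelet_support hw1s hlam h
  have hcross : ∀ t, w1 ((t - τs)/lam) * w1 ((t - τc)/lam) = 0 := by
    intro t
    by_contra h
    have h1 := hsupS t (left_ne_zero_of_mul h)
    have h2 := hsupC t (right_ne_zero_of_mul h)
    rcases abs_cases (τc - τs) with ⟨he, _⟩ | ⟨he, _⟩ <;> rw [he] at hsep <;> linarith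
  have hr_sq : ∀ t, (r t)^2
      = (1/(2*cstar))^2 * ((1/Real.sqrt lam) * w1 ((t - τs)/lam))^2
        + (1/(2*c))^2 * ((1/Real.sqrt lam) * w1 ((t - τc)/lam))^2 := by
    intro t
    have h := hcross t
    rw [hrdef]
    linear_combination (-2 * (1/(2*cstar)) * (1/(2*c)) * (1/Real.sqrt lam)^2) * h
  -- continuity and compact support of r
  have hrcont : Continuous r := by
    rw [hrdef]
    fun_prop
  have hr_supp : Function.support r ⊆ Ioc 0 T := by
    intro t ht
    rw [Function.mem_support, hrdef] at ht
    have : w1 ((t - τs)/lam) ≠ 0 ∨ w1 ((t - τc)/lam) ≠ 0 := by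
      by_contra hcon
      push_neg at hcon
      simp [hcon.1, hcon.2] at ht
    rcases this with h | h
    · have := hsupS t h; exact ⟨by linarith [this.1], by linarith [this.2]⟩
    · have := hsupC t h; exact ⟨by linarith [this.1], by linarith [this.2]⟩
  have hrcs : HasCompactSupport r := by
    apply HasCompactSupport.intro (isCompact_Icc (a := (0:ℝ)) (b := T))
    intro x hx
    by_contra hr0
    exact hx (Ioc_subset_Icc_self (hr_supp hr0))
  have hrsq_cs : HasCompactSupport (fun t => (r t)^2) := by
    have : (fun t => (r t)^2) = (fun u : ℝ => u^2) ∘ r := rfl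
    rw [this]
    exact hrcs.comp_left (by norm_num)
  have hrsq_int : Integrable (fun t => (r t)^2) volume :=
    (hrcont.pow 2).integrable_of_hasCompactSupport hrsq_cs
  -- value of ∫ r^2
  have hws_int : ∀ τ : ℝ, Integrable (fun t => ((1/Real.sqrt lam) * w1 ((t - τ)/lam))^2) volume := by
    intro τ
    apply Continuous.integrable_of_hasCompactSupport (by fun_prop)
    apply HasCompactSupport.intro (isCompact_Icc (a := τ) (b := τ + lam))
    intro x hx
    by_contra h0
    have hw : w1 ((x - τ)/lam) ≠ 0 := by
      intro hw; exact h0 (by rw [hw]; ring)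
    have := wavelet_support hw1s hlam hw
    exact hx ⟨this.1.le, this.2.le⟩
  have hRfull : ∫ t : ℝ, (r t)^2 = (1/(4*c^2) + 1/(4*cstar^2)) * W := by
    have h1 : (fun t => (r t)^2) = fun t =>
        (1/(2*cstar))^2 * ((1/Real.sqrt lam) * w1 ((t - τs)/lam))^2
          + (1/(2*c))^2 * ((1/Real.sqrt lam) * w1 ((t - τc)/lam))^2 := funext hr_sq
    rw [h1]
    calc ∫ t : ℝ, ((1/(2*cstar))^2 * ((1/Real.sqrt lam) * w1 ((t - τs)/lam))^2
          + (1/(2*c))^2 * ((1/Real.sqrt lam) * w1 ((t - τc)/lam))^2)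
        = (∫ t : ℝ, (1/(2*cstar))^2 * ((1/Real.sqrt lam) * w1 ((t - τs)/lam))^2)
          + ∫ t : ℝ, (1/(2*c))^2 * ((1/Real.sqrt lam) * w1 ((t - τc)/lam))^2 :=
          integral_add ((hws_int τs).const_mul _) ((hws_int τc).const_mul _)
      _ = (1/(2*cstar))^2 * W + (1/(2*c))^2 * W := by
          rw [integral_const_mul, integral_const_mul,
            wavelet_sq_integral w1 τs hlam, wavelet_sq_integral w1 τc hlam]
      _ = (1/(4*c^2) + 1/(4*cstar^2)) * W := by ring
  have hR : ∫ t in (0:ℝ)..T, (r t)^2 = (1/(4*c^2) + 1/(4*cstar^2)) * W := by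
    rw [← hRfull]
    apply integral_eq_of_support_subset_Ioc hT.le
    intro t ht
    apply hr_supp
    rw [Function.mem_support] at ht ⊢
    exact fun h => ht (by rw [h]; ring)
  -- ======== PART A : the witness g* ========
  set θ : ℝ := ((zmax - zmin)/(2*c)) / (((zmax - zmin)/(2*c))^2 + α^2*(zmax - zmin)) with hθ
  set gstar : ℝ → ℝ → ℝ := fun z t => θ * r (t + |zr - z| / c) with hgstar
  -- bound for r
  obtain ⟨Cb, hCb⟩ := hrcs.exists_bound_of_continuous hrcont
  have hCb0 : 0 ≤ Cb := le_trans (norm_nonneg (r 0)) (hCb 0)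
  set M : ℝ := |zr| + |zmin| + |zmax| with hM
  have hM0 : 0 ≤ M := by positivity
  -- Memℒp of gstar
  have hmemg : MemLp (fun p : ℝ × ℝ => gstar p.1 p.2) 2
      ((volume.restrict (Icc zmin zmax)).prod volume) := by
    set μ := (volume.restrict (Icc zmin zmax)).prod (volume : Measure ℝ) with hμ
    set B : Set (ℝ × ℝ) := (Icc zmin zmax) ×ˢ (Icc (-(M/c)) T) with hB
    have hBm : MeasurableSet B := (measurableSet_Icc).prod measurableSet_Icc
    have hBfin : μ B ≠ ⊤ := by
      rw [hB, hμ, Measure.prod_prod]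
      refine (ENNReal.mul_lt_top ?_ ?_).ne
      · exact lt_of_le_of_lt (Measure.restrict_apply_le _ _) measure_Icc_lt_top
      · exact measure_Icc_lt_top
    have hdom : MemLp (B.indicator fun _ => (|θ| * Cb)) 2 μ :=
      memLp_indicator_const 2 hBm _ (Or.inr hBfin)
    have hae1 : ∀ᵐ p : ℝ × ℝ ∂μ, p.1 ∈ Icc zmin zmax := by
      rw [ae_iff]
      refine measure_mono_null (fun p hp => ?_) (?_ : μ (((Icc zmin zmax)ᶜ) ×ˢ univ) = 0)
      · simp only [mem_setOf_eq, Decidable.not_not] at hp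
        exact ⟨hp, trivial⟩
      · rw [hμ, Measure.prod_prod, Measure.restrict_apply (measurableSet_Icc.compl)]
        simp
    have hbound : ∀ᵐ p : ℝ × ℝ ∂μ,
        ‖gstar p.1 p.2‖ ≤ ‖(B.indicator fun _ => (|θ| * Cb)) p‖ := by
      filter_upwards [hae1] with p hp
      by_cases hp2 : p.2 ∈ Icc (-(M/c)) T
      · have hmemB : p ∈ B := ⟨hp, hp2⟩
        have hn : ‖(B.indicator fun _ => (|θ| * Cb)) p‖ = |θ| * Cb := by
          rw [indicator_of_mem hmemB, Real.norm_eq_abs]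
          exact abs_of_nonneg (by positivity)
        rw [hn]
        calc ‖gstar p.1 p.2‖ = |θ| * ‖r (p.2 + |zr - p.1| / c)‖ := by
              rw [hgstar]; simp [Real.norm_eq_abs, abs_mul]
          _ ≤ |θ| * Cb := mul_le_mul_of_nonneg_left (hCb _) (abs_nonneg θ)
      · have hs_bnd : |zr - p.1| / c ≤ M / c := by
          gcongr
          calc |zr - p.1| ≤ |zr| + |p.1| := abs_sub zr p.1
            _ ≤ M := by
              rw [hM]
              have h1 : |p.1| ≤ |zmin| + |zmax| := by
                rcases hp with ⟨ha, hb⟩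
                rw [abs_le]
                constructor
                · have : -|zmin| ≤ zmin := neg_abs_le zmin
                  linarith [abs_nonneg zmax]
                · have : zmax ≤ |zmax| := le_abs_self zmax
                  linarith [abs_nonneg zmin]
              linarith
        have hr0 : r (p.2 + |zr - p.1| / c) = 0 := by
          by_contra h0
          have := hr_supp (Function.mem_support.mpr h0)
          rcases this with ⟨hgt, hle⟩
          rw [mem_Icc, not_and_or] at hp2
          push_neg at hp2
          have hsnn : 0 ≤ |zr - p.1| / c := div_nonneg (abs_nonneg _) hc0.le
          rcases hp2 with h | h
          · linarith
          · linarith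
        rw [hgstar]
        simp [hr0]
    have hgc : Continuous (fun p : ℝ × ℝ => gstar p.1 p.2) := by
      rw [hgstar]
      exact continuous_const.mul (hrcont.comp (continuous_snd.add
        (((continuous_const.sub continuous_fst).abs).div_const c)))
    exact MemLp.of_le hdom hgc.aestronglyMeasurable hbound
  -- value of the objective at gstar
  have hz1 : ∀ t : ℝ, (∫ z in zmin..zmax, gstar z (t - |zr - z| / c))
      = (zmax - zmin) * (θ * r t) := by
    intro t
    have he : (fun z => gstar z (t - |zr - z| / c)) = fun _ => θ * r t := by
      funext z
      rw [hgstar]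
      congr 1
      congr 1
      ring
    rw [he, intervalIntegral.integral_const, smul_eq_mul]
  have hpen_inner : ∀ z : ℝ, (∫ t : ℝ, (gstar z t)^2)
      = θ^2 * ((1/(4*c^2) + 1/(4*cstar^2)) * W) := by
    intro z
    have he : (fun t : ℝ => (gstar z t)^2)
        = fun t : ℝ => θ^2 * (fun u => (r u)^2) (t + |zr - z| / c) := by
      funext t; rw [hgstar]; simp [mul_pow]
    rw [he, integral_const_mul, integral_add_right_eq_self (fun u => (r u)^2) (|zr - z| / c),
      hRfull]
  have hI2 : (∫ z in zmin..zmax, ∫ t : ℝ, (gstar z t)^2)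
      = (zmax - zmin) * (θ^2 * ((1/(4*c^2) + 1/(4*cstar^2)) * W)) := by
    have he : (fun z => ∫ t : ℝ, (gstar z t)^2)
        = fun _ => θ^2 * ((1/(4*c^2) + 1/(4*cstar^2)) * W) := funext hpen_inner
    rw [he, intervalIntegral.integral_const, smul_eq_mul]
  have e1 : (fun t => ((1/(2*cstar)) * ((1/Real.sqrt lam) * w1 ((t - τs) / lam))
                - (1/(2*c)) * ((1/Real.sqrt lam) * w1 ((t - τc) / lam))
                - (1/(2*c)) * ∫ z in zmin..zmax, gstar z (t - |zr - z| / c)) ^ 2)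
      = fun t => (1 - (zmax - zmin)/(2*c)*θ)^2 * (r t)^2 := by
    funext t
    rw [hz1 t, hrdef]
    ring
  have hmem : (1/(8*cstar^2) * W) ∈ { v : ℝ | ∃ g : ℝ → ℝ → ℝ,
        MemLp (fun p : ℝ × ℝ => g p.1 p.2) 2
          ((volume.restrict (Icc zmin zmax)).prod volume) ∧
        v = (1/2) * ((∫ t in (0:ℝ)..T,
              ((1/(2*cstar)) * ((1/Real.sqrt lam) * w1 ((t - |zs - zr| / cstar) / lam))
                - (1/(2*c)) * ((1/Real.sqrt lam) * w1 ((t - |zs - zr| / c) / lam))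
                - (1/(2*c)) * ∫ z in zmin..zmax, g z (t - |zr - z| / c)) ^ 2)
            + α^2 * ∫ z in zmin..zmax, ∫ t : ℝ, (g z t) ^ 2) } := by
    refine ⟨gstar, hmemg, ?_⟩
    rw [e1, hI2, intervalIntegral.integral_const_mul, hR, hθ, hZc]
    have hden : ((4*α^2*cstar^2)/(2*c))^2 + α^2*(4*α^2*cstar^2) ≠ 0 := by positivity
    field_simp
    ring
  -- ======== PART B : lower bound ========
  set μ1 := volume.restrict (Icc zmin zmax) with hμ1
  haveI hfin : IsFiniteMeasure μ1 := by
    constructor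
    rw [hμ1, Measure.restrict_apply_univ]
    exact measure_Icc_lt_top
  have hμ1Z : (μ1 univ).toReal = zmax - zmin := by
    rw [hμ1, Measure.restrict_apply_univ, Real.volume_Icc, ENNReal.toReal_ofReal hZ.le]
  have hlow : ∀ v ∈ { v : ℝ | ∃ g : ℝ → ℝ → ℝ,
        MemLp (fun p : ℝ × ℝ => g p.1 p.2) 2 (μ1.prod volume) ∧
        v = (1/2) * ((∫ t in (0:ℝ)..T,
              ((1/(2*cstar)) * ((1/Real.sqrt lam) * w1 ((t - |zs - zr| / cstar) / lam))
                - (1/(2*c)) * ((1/Real.sqrt lam) * w1 ((t - |zs - zr| / c) / lam))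
                - (1/(2*c)) * ∫ z in zmin..zmax, g z (t - |zr - z| / c)) ^ 2)
            + α^2 * ∫ z in zmin..zmax, ∫ t : ℝ, (g z t) ^ 2) },
      1/(8*cstar^2) * W ≤ v := by
    rintro v ⟨g, hg, hv⟩
    set F : ℝ × ℝ → ℝ := fun p => g p.1 p.2 with hF
    have hFm := hg.aestronglyMeasurable
    set F0 := hFm.mk F with hF0
    have hF0sm : StronglyMeasurable F0 := hFm.stronglyMeasurable_mk
    have hFeq : F =ᵐ[μ1.prod volume] F0 := hFm.ae_eq_mk
    have hF0L2 : MemLp F0 2 (μ1.prod volume) := hg.ae_eq hFeq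
    have hF0sq : Integrable (fun p => (F0 p)^2) (μ1.prod volume) :=
      (memLp_two_iff_integrable_sq hF0sm.aestronglyMeasurable).mp hF0L2
    -- the shear map
    set sh : ℝ → ℝ := fun z => |zr - z| / c with hsh
    have hshcont : Continuous sh := by
      rw [hsh]; exact ((continuous_const.sub continuous_id).abs).div_const c
    set Φ : ℝ × ℝ → ℝ × ℝ := fun p => (p.1, p.2 - sh p.1) with hΦdef
    have hΦm : Measurable Φ := by
      rw [hΦdef]
      exact measurable_fst.prodMk
        (measurable_snd.sub (hshcont.measurable.comp measurable_fst))
    have hΦ : MeasurePreserving Φ (μ1.prod volume) (μ1.prod volume) := by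
      rw [hΦdef]
      refine MeasurePreserving.skew_product (g := fun z t => t - sh z)
        (MeasurePreserving.id μ1)
        (measurable_snd.sub (hshcont.measurable.comp measurable_fst)) ?_
      apply ae_of_all
      intro z
      show Measure.map (fun t : ℝ => t - sh z) volume = volume
      have he : (fun t : ℝ => t - sh z) = fun t : ℝ => t + (-(sh z)) := by
        funext t; ring
      rw [he, map_add_right_eq_self]
    set G0 : ℝ × ℝ → ℝ := fun p => F0 (Φ p) with hG0def
    have hG0sm : StronglyMeasurable G0 := hF0sm.comp_measurable hΦm
    have hG0L2 : MemLp G0 2 (μ1.prod volume) := hF0L2.comp_measurePreserving hΦ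
    have hG0sq : Integrable (fun p => (G0 p)^2) (μ1.prod volume) :=
      (memLp_two_iff_integrable_sq hG0sm.aestronglyMeasurable).mp hG0L2
    -- penalty identity
    have hPz : ∀ᵐ z ∂μ1, (∫ t : ℝ, (g z t)^2) = ∫ t : ℝ, (F0 (z, t))^2 := by
      filter_upwards [Measure.ae_ae_of_ae_prod hFeq] with z hz2
      apply integral_congr_ae
      filter_upwards [hz2] with t ht
      rw [show g z t = F (z, t) from rfl, ht]
    have hPen : (∫ z in zmin..zmax, ∫ t : ℝ, (g z t)^2)
        = ∫ p, (F0 p)^2 ∂(μ1.prod volume) := by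
      rw [intervalIntegral.integral_of_le hz.le, ← integral_Icc_eq_integral_Ioc]
      have h1 : ∫ z in Icc zmin zmax, (∫ t : ℝ, (g z t)^2)
          = ∫ z, (∫ t : ℝ, (F0 (z, t))^2) ∂μ1 := integral_congr_ae hPz
      rw [h1]
      exact (integral_prod _ hF0sq).symm
    have hFG : ∫ p, (F0 p)^2 ∂(μ1.prod volume) = ∫ p, (G0 p)^2 ∂(μ1.prod volume) := by
      have hmap := hΦ.map_eq
      have haesm : AEStronglyMeasurable (fun p => (F0 p)^2) (Measure.map Φ (μ1.prod volume)) := by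
        rw [hmap]; exact hF0sq.aestronglyMeasurable
      calc ∫ p, (F0 p)^2 ∂(μ1.prod volume)
          = ∫ p, (F0 p)^2 ∂(Measure.map Φ (μ1.prod volume)) := by rw [hmap]
        _ = ∫ p, (F0 (Φ p))^2 ∂(μ1.prod volume) := integral_map hΦm.aemeasurable haesm
        _ = ∫ p, (G0 p)^2 ∂(μ1.prod volume) := rfl
    -- swapped statements, a.e. slices in t
    have hswapmp : MeasurePreserving (Prod.swap : ℝ × ℝ → ℝ × ℝ)
        ((volume : Measure ℝ).prod μ1) (μ1.prod volume) := Measure.measurePreserving_swap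
    have hGae : (fun p : ℝ × ℝ => g p.1 (p.2 - sh p.1)) =ᵐ[μ1.prod volume] G0 :=
      hΦ.quasiMeasurePreserving.ae_eq_comp hFeq
    have hswap_ae : (fun q : ℝ × ℝ => g q.2 (q.1 - sh q.2))
        =ᵐ[(volume : Measure ℝ).prod μ1] (fun q : ℝ × ℝ => G0 (q.2, q.1)) :=
      hswapmp.quasiMeasurePreserving.ae_eq_comp hGae
    have hae_t1 : ∀ᵐ t ∂(volume : Measure ℝ), ∀ᵐ z ∂μ1, g z (t - sh z) = G0 (z, t) :=
      Measure.ae_ae_of_ae_prod hswap_ae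
    have hG0sq_swap : Integrable (fun q : ℝ × ℝ => (G0 (q.2, q.1))^2)
        ((volume : Measure ℝ).prod μ1) := hG0sq.swap
    have hae_t2 : ∀ᵐ t ∂(volume : Measure ℝ), Integrable (fun z => (G0 (z, t))^2) μ1 :=
      hG0sq.prod_left_ae
    have hae_t3 : ∀ᵐ t ∂(volume : Measure ℝ), Integrable (fun z => G0 (z, t)) μ1 := by
      filter_upwards [hae_t2] with t h2
      have hsm : AEStronglyMeasurable (fun z => G0 (z, t)) μ1 :=
        (hG0sm.comp_measurable (measurable_id.prodMk measurable_const)).aestronglyMeasurable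
      exact ((memLp_two_iff_integrable_sq hsm).mpr h2).integrable one_le_two
    set φ0 : ℝ → ℝ := fun t => ∫ z, G0 (z, t) ∂μ1 with hφ0def
    have hφ0sm : StronglyMeasurable φ0 :=
      (hG0sm.comp_measurable measurable_swap).integral_prod_right' (ν := μ1)
    set ψ : ℝ → ℝ := fun t => ∫ z, (G0 (z, t))^2 ∂μ1 with hψdef
    have hψ_int : Integrable ψ volume := hG0sq_swap.integral_prod_left
    have hψ_nn : ∀ t, 0 ≤ ψ t := fun t => integral_nonneg fun z => sq_nonneg _
    have hψ_total : ∫ t, ψ t ∂volume = ∫ p, (G0 p)^2 ∂(μ1.prod volume) := by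
      have h1 : ∫ p, (G0 p)^2 ∂(μ1.prod volume) = ∫ z, (∫ t, (G0 (z, t))^2) ∂μ1 :=
        integral_prod _ hG0sq
      have h2 := integral_integral_swap (f := fun z t => (G0 (z, t))^2)
        (μ := μ1) (ν := volume) hG0sq
      rw [h1, h2]
    have hCS : ∀ᵐ t ∂(volume : Measure ℝ), (φ0 t)^2 ≤ (zmax - zmin) * ψ t := by
      filter_upwards [hae_t2, hae_t3] with t h2 h3
      have hcs := cs_sq_integral h3 h2
      rw [hμ1Z] at hcs
      exact hcs
    have hφ0sq_sm : AEStronglyMeasurable (fun t => (φ0 t)^2) volume := by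
      have he : (fun t => (φ0 t)^2) = fun t => φ0 t * φ0 t := by funext t; ring
      rw [he]; exact (hφ0sm.mul hφ0sm).aestronglyMeasurable
    have hφ0sq_int : Integrable (fun t => (φ0 t)^2) volume := by
      apply Integrable.mono' (hψ_int.const_mul (zmax - zmin)) hφ0sq_sm
      filter_upwards [hCS] with t ht
      rw [Real.norm_eq_abs, abs_of_nonneg (sq_nonneg _)]
      exact ht
    -- identification of the exact slice integrals
    have hslice : ∀ᵐ t ∂(volume : Measure ℝ),
        (∫ z in zmin..zmax, g z (t - |zr - z| / c)) = φ0 t := by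
      filter_upwards [hae_t1] with t h1
      rw [intervalIntegral.integral_of_le hz.le, ← integral_Icc_eq_integral_Ioc]
      exact integral_congr_ae h1
    -- rewrite v with the measurable versions
    set I1 := ∫ t in Ioc (0:ℝ) T, (r t - (1/(2*c)) * φ0 t)^2 ∂volume with hI1def
    have hv2 : v = (1/2) * (I1 + α^2 * ∫ p, (G0 p)^2 ∂(μ1.prod volume)) := by
      rw [hv, hPen, hFG]
      have hT1 : (∫ t in (0:ℝ)..T,
            ((1/(2*cstar)) * ((1/Real.sqrt lam) * w1 ((t - |zs - zr| / cstar) / lam))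
              - (1/(2*c)) * ((1/Real.sqrt lam) * w1 ((t - |zs - zr| / c) / lam))
              - (1/(2*c)) * ∫ z in zmin..zmax, g z (t - |zr - z| / c)) ^ 2) = I1 := by
        rw [intervalIntegral.integral_of_le hT.le, hI1def]
        apply integral_congr_ae
        apply ae_restrict_of_ae
        filter_upwards [hslice] with t ht
        rw [ht, hrdef]
      rw [hT1]
    -- integrability on the window
    have hq2 : Integrable (fun t => (φ0 t)^2) (volume.restrict (Ioc (0:ℝ) T)) :=
      hφ0sq_int.restrict
    have hq3 : Integrable (fun t => (r t)^2) (volume.restrict (Ioc (0:ℝ) T)) :=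
      hrsq_int.restrict
    have hψr : Integrable ψ (volume.restrict (Ioc (0:ℝ) T)) := hψ_int.restrict
    have hq1 : Integrable (fun t => (r t - (1/(2*c)) * φ0 t)^2)
        (volume.restrict (Ioc (0:ℝ) T)) := by
      apply Integrable.mono' ((hq3.const_mul 2).add (hq2.const_mul (2*(1/(2*c))^2)))
      · have he : (fun t => (r t - (1/(2*c)) * φ0 t)^2)
            = fun t => (r t - (1/(2*c)) * φ0 t) * (r t - (1/(2*c)) * φ0 t) := by
          funext t; ring
        rw [he]
        have hsm1 : StronglyMeasurable (fun t => r t - (1/(2*c)) * φ0 t) :=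
          hrcont.stronglyMeasurable.sub (hφ0sm.const_mul _)
        exact (hsm1.mul hsm1).aestronglyMeasurable
      · apply ae_of_all
        intro t
        rw [Real.norm_eq_abs, abs_of_nonneg (sq_nonneg _)]
        have expand : 2*(r t)^2 + 2*(1/(2*c))^2*(φ0 t)^2 - (r t - (1/(2*c))*φ0 t)^2
            = (r t + (1/(2*c))*φ0 t)^2 := by ring
        simp only [Pi.add_apply]
        linarith [sq_nonneg (r t + (1/(2*c))*φ0 t), expand]
    -- chain of inequalities
    have hstep1 : ∫ t in Ioc (0:ℝ) T, ψ t ∂volume ≤ ∫ p, (G0 p)^2 ∂(μ1.prod volume) := by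
      rw [← hψ_total]
      exact setIntegral_le_integral hψ_int (ae_of_all _ hψ_nn)
    have hstep2 : (1/(zmax - zmin)) * ∫ t in Ioc (0:ℝ) T, (φ0 t)^2 ∂volume
        ≤ ∫ t in Ioc (0:ℝ) T, ψ t ∂volume := by
      rw [← MeasureTheory.integral_const_mul]
      apply integral_mono_ae (hq2.const_mul _) hψr
      apply ae_restrict_of_ae
      filter_upwards [hCS] with t ht
      have h2 : (1/(zmax - zmin)) * (φ0 t)^2
          ≤ (1/(zmax - zmin)) * ((zmax - zmin) * ψ t) :=
        mul_le_mul_of_nonneg_left ht (by positivity)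
      have h3 : (1/(zmax - zmin)) * ((zmax - zmin) * ψ t) = ψ t := by
        field_simp
      linarith
    have hstep3 : ∀ t, (α^2/(α^2 + (zmax - zmin)/(4*c^2))) * (r t)^2
        ≤ (r t - (1/(2*c)) * φ0 t)^2 + (α^2/(zmax - zmin)) * (φ0 t)^2 := by
      intro t
      have h := quad_lower (A := (zmax - zmin)/(4*c^2)) (a2 := α^2)
        (by positivity) (by positivity) ((1/(2*c)) * φ0 t) (r t)
      have he : α^2/((zmax - zmin)/(4*c^2)) * ((1/(2*c)) * φ0 t)^2
          = (α^2/(zmax - zmin)) * (φ0 t)^2 := by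
        field_simp
        ring
      rw [he] at h
      exact h
    have hIR : ∫ t in Ioc (0:ℝ) T, (r t)^2 ∂volume = (1/(4*c^2) + 1/(4*cstar^2)) * W := by
      rw [← hR, intervalIntegral.integral_of_le hT.le]
    have hstep4 : (α^2/(α^2 + (zmax - zmin)/(4*c^2))) * ((1/(4*c^2) + 1/(4*cstar^2)) * W)
        ≤ I1 + (α^2/(zmax - zmin)) * ∫ t in Ioc (0:ℝ) T, (φ0 t)^2 ∂volume := by
      calc (α^2/(α^2 + (zmax - zmin)/(4*c^2))) * ((1/(4*c^2) + 1/(4*cstar^2)) * W)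
          = ∫ t in Ioc (0:ℝ) T, (α^2/(α^2 + (zmax - zmin)/(4*c^2))) * (r t)^2 ∂volume := by
            rw [MeasureTheory.integral_const_mul, hIR]
        _ ≤ ∫ t in Ioc (0:ℝ) T,
              ((r t - (1/(2*c)) * φ0 t)^2 + (α^2/(zmax - zmin)) * (φ0 t)^2) ∂volume := by
            refine integral_mono_ae
              (hq3.const_mul (α^2/(α^2 + (zmax - zmin)/(4*c^2))))
              (hq1.add (hq2.const_mul (α^2/(zmax - zmin))))
              (ae_of_all _ fun t => hstep3 t)
        _ = (∫ t in Ioc (0:ℝ) T, (r t - (1/(2*c)) * φ0 t)^2 ∂volume)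
            + ∫ t in Ioc (0:ℝ) T, (α^2/(zmax - zmin)) * (φ0 t)^2 ∂volume :=
            integral_add hq1 (hq2.const_mul _)
        _ = I1 + (α^2/(zmax - zmin)) * ∫ t in Ioc (0:ℝ) T, (φ0 t)^2 ∂volume := by
            rw [MeasureTheory.integral_const_mul]
    have hG0nn : 0 ≤ ∫ p, (G0 p)^2 ∂(μ1.prod volume) :=
      integral_nonneg fun p => sq_nonneg _
    have hA1 : (α^2/(zmax - zmin)) * ∫ t in Ioc (0:ℝ) T, (φ0 t)^2 ∂volume
        ≤ α^2 * ∫ p, (G0 p)^2 ∂(μ1.prod volume) := by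
      have e1 : (α^2/(zmax - zmin)) * ∫ t in Ioc (0:ℝ) T, (φ0 t)^2 ∂volume
          = α^2 * ((1/(zmax - zmin)) * ∫ t in Ioc (0:ℝ) T, (φ0 t)^2 ∂volume) := by ring
      rw [e1]
      calc α^2 * ((1/(zmax - zmin)) * ∫ t in Ioc (0:ℝ) T, (φ0 t)^2 ∂volume)
          ≤ α^2 * ∫ t in Ioc (0:ℝ) T, ψ t ∂volume :=
            mul_le_mul_of_nonneg_left hstep2 (by positivity)
        _ ≤ α^2 * ∫ p, (G0 p)^2 ∂(μ1.prod volume) :=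
            mul_le_mul_of_nonneg_left hstep1 (by positivity)
    have halg : 1/(8*cstar^2) * W = (1/2) * ((α^2/(α^2 + (zmax - zmin)/(4*c^2)))
        * ((1/(4*c^2) + 1/(4*cstar^2)) * W)) := by
      rw [hZc]
      field_simp
      ring
    rw [hv2, halg]
    have := le_trans hstep4 (by linarith : I1 + (α^2/(zmax - zmin)) * ∫ t in Ioc (0:ℝ) T, (φ0 t)^2 ∂volume ≤ I1 + α^2 * ∫ p, (G0 p)^2 ∂(μ1.prod volume))
    linarith
  apply le_antisymm
  · exact csInf_le ⟨1/(8*cstar^2) * W, fun v hv => hlow v hv⟩ hmem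
  · exact le_csInf ⟨1/(8*cstar^2) * W, hmem⟩ fun v hv => hlow v hv




/-- Theorem 2 of the paper, case `β = 0`: the WRI objective is constant on the part of
`[cmin, cmax]` outside a wavelength-sized neighborhood of the target velocity. -/
theorem wri_constant_outside_window
    (zs zr zmin zmax T cmin cmax cstar lam α : ℝ) (w1 : ℝ → ℝ)
    (hzr : zs ≠ zr) (hz : zmin < zmax) (hT : 0 < T)
    (hcmin : 0 < cmin) (hcc : cmin ≤ cmax)
    (htransit : |zs - zr| / cmin < T)
    (hw1c : Continuous w1) (hw1s : Function.support w1 ⊆ Ioo 0 1)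
    (hcstar : cstar ∈ Icc cmin cmax)
    (hlam : 0 < lam) (hlam0 : lam < T - |zs - zr| / cmin)
    (hα : 0 < α)
    (hβ : (zmax - zmin) / cstar^2 - 4 * α^2 = 0)
    (JW : ℝ → ℝ)
    (hJW : ∀ c, JW c = sInf { v : ℝ | ∃ g : ℝ → ℝ → ℝ,
        MemLp (fun p : ℝ × ℝ => g p.1 p.2) 2
          ((volume.restrict (Icc zmin zmax)).prod volume) ∧
        v = (1/2) * ((∫ t in (0:ℝ)..T,
              ((1/(2*cstar)) * ((1/Real.sqrt lam) * w1 ((t - |zs - zr| / cstar) / lam))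
                - (1/(2*c)) * ((1/Real.sqrt lam) * w1 ((t - |zs - zr| / c) / lam))
                - (1/(2*c)) * ∫ z in zmin..zmax, g z (t - |zr - z| / c)) ^ 2)
            + α^2 * ∫ z in zmin..zmax, ∫ t : ℝ, (g z t) ^ 2) }) :
    ∀ c ∈ Icc cmin cmax, |c - cstar| > (2 * cmax ^ 2 / |zs - zr|) * lam →
      ∀ c' ∈ Icc cmin cmax, |c' - cstar| > (2 * cmax ^ 2 / |zs - zr|) * lam →
        JW c = JW c' := by
  intro c hc hcw c' hc' hcw'
  rw [hJW c, hJW c',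
    wri_sInf_eq zs zr zmin zmax T cmin cmax cstar lam α w1 hzr hz hT hcmin hcc htransit
      hw1c hw1s hcstar hlam hlam0 hα hβ c hc hcw,
    wri_sInf_eq zs zr zmin zmax T cmin cmax cstar lam α w1 hzr hz hT hcmin hcc htransit
      hw1c hw1s hcstar hlam hlam0 hα hβ c' hc' hcw']
end

section
/- For every c > 0, α > 0, d ∈ L²([0,T]) and w ∈ L²(ℝ), the reduced WRI objective is a scalar multiple of the FWI objective: inf over g ∈ L²([z_min,z_max]×ℝ) of (1/2)·(‖d − S_p[c]w − S[c]g‖²_{L²([0,T])} + α²·‖g‖²) equals u(c)·(1/2)·‖d − S_p[c]w‖²_{L²([0,T])}, where u(c) = α²·((z_max − z_min)/(4c²) + α²)⁻¹ = 4c²α²/((z_max − z_min) + 4c²α²). (Equations 27–28 of the paper.) -/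
open MeasureTheory Set

set_option maxHeartbeats 2000000

/-- Cauchy-Schwarz: square of integral bounded by measure times integral of square. -/
lemma sq_integral_le {ν : Measure ℝ} [IsFiniteMeasure ν] {F : ℝ → ℝ} (hF : MemLp F 2 ν) :
    (∫ x, F x ∂ν) ^ 2 ≤ (ν univ).toReal * ∫ x, (F x) ^ 2 ∂ν := by
  set ℓ := (ν univ).toReal with hℓdef
  have hℓ0 : 0 ≤ ℓ := ENNReal.toReal_nonneg
  have hFi : Integrable F ν := hF.integrable one_le_two
  have hF2 : Integrable (fun x => (F x) ^ 2) ν := hF.integrable_sq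
  set I := ∫ x, F x ∂ν with hI
  have key : 0 ≤ ∫ x, (ℓ * F x - I) ^ 2 ∂ν := integral_nonneg fun x => sq_nonneg _
  have expand : ∫ x, (ℓ * F x - I) ^ 2 ∂ν
      = ℓ ^ 2 * (∫ x, (F x) ^ 2 ∂ν) - (2 * ℓ * I) * I + I ^ 2 * ℓ := by
    have hfe : (fun x => (ℓ * F x - I) ^ 2)
        = fun x => (ℓ ^ 2 * (F x) ^ 2 - (2 * ℓ * I) * F x) + I ^ 2 := by
      funext x; ring
    rw [hfe, integral_add (f := fun x => ℓ ^ 2 * (F x) ^ 2 - (2 * ℓ * I) * F x)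
        (g := fun _ => I ^ 2) ((hF2.const_mul _).sub (hFi.const_mul _)) (integrable_const _),
      integral_sub (hF2.const_mul _) (hFi.const_mul _), integral_const_mul, integral_const_mul,
      integral_const, smul_eq_mul, mul_comm]
    rw [← hI, measureReal_def, ← hℓdef]; ring
  rcases eq_or_lt_of_le hℓ0 with h0 | hpos
  · have hν0 : ν = 0 := by
      have : ν univ = 0 := by
        have := ENNReal.toReal_eq_zero_iff (ν univ)
        rcases this.mp h0.symm with h | h
        · exact h
        · exact absurd h (measure_ne_top ν univ)
      exact Measure.measure_univ_eq_zero.mp this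
    simp [hI, hν0]
  · rw [expand] at key
    nlinarith [key, hpos]

/-- The shear `(z, t) ↦ (z, t - φ z)` as a measurable equivalence. -/
def shearEquiv (φ : ℝ → ℝ) (hφ : Measurable φ) : (ℝ × ℝ) ≃ᵐ (ℝ × ℝ) where
  toEquiv :=
  { toFun := fun p => (p.1, p.2 - φ p.1)
    invFun := fun p => (p.1, p.2 + φ p.1)
    left_inv := fun p => by simp
    right_inv := fun p => by simp }
  measurable_toFun := measurable_fst.prodMk (measurable_snd.sub (hφ.comp measurable_fst))
  measurable_invFun := measurable_fst.prodMk (measurable_snd.add (hφ.comp measurable_fst))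

lemma shear_mp (μ : Measure ℝ) [SFinite μ] (φ : ℝ → ℝ) (hφ : Measurable φ) :
    MeasurePreserving (fun p : ℝ × ℝ => (p.1, p.2 - φ p.1)) (μ.prod volume) (μ.prod volume) :=
  (MeasurePreserving.id μ).skew_product (g := fun a y => y - φ a)
    (measurable_snd.sub (hφ.comp measurable_fst))
    (ae_of_all _ fun a => by
      simp only [sub_eq_add_neg]
      exact map_add_right_eq_self volume (-φ a))

lemma shear_mp_add (μ : Measure ℝ) [SFinite μ] (φ : ℝ → ℝ) (hφ : Measurable φ) :
    MeasurePreserving (fun p : ℝ × ℝ => (p.1, p.2 + φ p.1)) (μ.prod volume) (μ.prod volume) :=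
  (MeasurePreserving.id μ).skew_product (g := fun a y => y + φ a)
    (measurable_snd.add (hφ.comp measurable_fst))
    (ae_of_all _ fun a => map_add_right_eq_self volume (φ a))

/-- Equations 27–28 of the paper: the reduced WRI objective is the FWI objective
scaled by `u(c) = 4c²α²/((zmax - zmin) + 4c²α²)`. -/
theorem wri_is_scaled_fwi
    (zs zr zmin zmax T c α : ℝ)
    (hzr : zs ≠ zr) (hz : zmin < zmax) (hT : 0 < T) (hc : 0 < c) (hα : 0 < α)
    (d w : ℝ → ℝ)
    (hd : MemLp d 2 (volume.restrict (Icc 0 T))) (hw : MemLp w 2) :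
    sInf { v : ℝ | ∃ g : ℝ → ℝ → ℝ,
        MemLp (fun p : ℝ × ℝ => g p.1 p.2) 2
          ((volume.restrict (Icc zmin zmax)).prod volume) ∧
        v = (1/2) * ((∫ t in (0:ℝ)..T,
              (d t - (1/(2*c)) * w (t - |zs - zr| / c)
                - (1/(2*c)) * ∫ z in zmin..zmax, g z (t - |zr - z| / c)) ^ 2)
            + α^2 * ∫ z in zmin..zmax, ∫ t : ℝ, (g z t) ^ 2) }
      = (4*c^2*α^2 / ((zmax - zmin) + 4*c^2*α^2)) *
          ((1/2) * ∫ t in (0:ℝ)..T, (d t - (1/(2*c)) * w (t - |zs - zr| / c)) ^ 2) := by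
  have hc0 : c ≠ 0 := ne_of_gt hc
  set L : ℝ := zmax - zmin with hLdef
  have hL0 : 0 < L := by rw [hLdef]; linarith
  have hφm : Measurable (fun z : ℝ => |zr - z| / c) :=
    ((measurable_const.sub measurable_id).abs.div_const c)
  set μ : Measure ℝ := volume.restrict (Icc zmin zmax) with hμdef
  set ν : Measure ℝ := volume.restrict (Ioc (0:ℝ) T) with hνdef
  haveI hμfin : IsFiniteMeasure μ := by
    constructor
    rw [hμdef, Measure.restrict_apply_univ]
    simp [Real.volume_Icc]
  haveI hνfin : IsFiniteMeasure ν := by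
    constructor
    rw [hνdef, Measure.restrict_apply_univ]
    simp [Real.volume_Ioc]
  have hLμ : (μ univ).toReal = L := by
    rw [hμdef, Measure.restrict_apply_univ]
    simp [Real.volume_Icc, hLdef, ENNReal.toReal_ofReal (by linarith : (0:ℝ) ≤ zmax - zmin)]
  set r : ℝ → ℝ := fun t => d t - (1/(2*c)) * w (t - |zs - zr| / c) with hrdef
  -- r is L² on [0,T]
  have hw' : MemLp (fun t => w (t - |zs - zr| / c)) 2 (volume : Measure ℝ) := by
    have mp : MeasurePreserving (fun t : ℝ => t - |zs - zr| / c) volume volume := by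
      simpa [sub_eq_add_neg] using
        measurePreserving_add_right (volume : Measure ℝ) (-(|zs - zr| / c))
    exact hw.comp_measurePreserving mp
  have hrIcc : MemLp r 2 (volume.restrict (Icc (0:ℝ) T)) := by
    rw [hrdef]
    exact hd.sub ((hw'.restrict _).const_mul _)
  have hrν : MemLp r 2 ν := by
    rw [hνdef]
    exact hrIcc.mono_measure (Measure.restrict_mono Ioc_subset_Icc_self le_rfl)
  -- conversion lemmas
  have cv_t : ∀ f : ℝ → ℝ, (∫ t in (0:ℝ)..T, f t) = ∫ t, f t ∂ν := by
    intro f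
    rw [intervalIntegral.integral_of_le hT.le, hνdef]
  have hIocIcc : volume.restrict (Ioc zmin zmax) = μ := by
    rw [hμdef]
    exact Measure.restrict_congr_set Ioc_ae_eq_Icc
  have cv_z : ∀ f : ℝ → ℝ, (∫ z in zmin..zmax, f z) = ∫ z, f z ∂μ := by
    intro f
    rw [intervalIntegral.integral_of_le hz.le, ← hIocIcc]
  -- scalar constants
  set lam : ℝ := 4*c^2*α^2 / L with hlamdef
  set u : ℝ := 4*c^2*α^2 / (L + 4*c^2*α^2) with hudef
  have hca : 0 < 4*c^2*α^2 := by positivity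
  have hden : 0 < L + 4*c^2*α^2 := by linarith
  have hlam_pos : 0 < lam := by rw [hlamdef]; positivity
  have hulam : u * (1 + lam) = lam := by
    rw [hudef, hlamdef]
    field_simp
  have hlamL : lam * (L/(4*c^2)) = α^2 := by
    rw [hlamdef]
    field_simp
  set k : ℝ := L / (2*c) with hkdef
  set β : ℝ := k / (k^2 + α^2 * L) with hβdef
  have hkden : 0 < k^2 + α^2 * L := by
    have h1 : 0 < α^2 * L := by positivity
    nlinarith [sq_nonneg k]
  -- the FWI integrand equals (r t)^2
  have hR_ex : (∫ t in (0:ℝ)..T, (d t - (1/(2*c)) * w (t - |zs - zr| / c)) ^ 2)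
      = ∫ t, (r t)^2 ∂ν := by
    rw [cv_t (fun t => (d t - (1/(2*c)) * w (t - |zs - zr| / c)) ^ 2)]
  set Rν : ℝ := ∫ t, (r t)^2 ∂ν with hRνdef
  -- Lower bound
  have hlow : ∀ v ∈ { v : ℝ | ∃ g : ℝ → ℝ → ℝ,
      MemLp (fun p : ℝ × ℝ => g p.1 p.2) 2
        ((volume.restrict (Icc zmin zmax)).prod volume) ∧
      v = (1/2) * ((∫ t in (0:ℝ)..T,
            (d t - (1/(2*c)) * w (t - |zs - zr| / c)
              - (1/(2*c)) * ∫ z in zmin..zmax, g z (t - |zr - z| / c)) ^ 2)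
          + α^2 * ∫ z in zmin..zmax, ∫ t : ℝ, (g z t) ^ 2) },
      (4*c^2*α^2 / ((zmax - zmin) + 4*c^2*α^2)) *
          ((1/2) * ∫ t in (0:ℝ)..T, (d t - (1/(2*c)) * w (t - |zs - zr| / c)) ^ 2) ≤ v := by
    rintro v ⟨g, hgmp, rfl⟩
    rw [← hμdef] at hgmp
    have hgsq : Integrable (fun p : ℝ × ℝ => (g p.1 p.2)^2) (μ.prod volume) := hgmp.integrable_sq
    set Gtot : ℝ := ∫ p : ℝ × ℝ, (g p.1 p.2)^2 ∂(μ.prod volume) with hGtotdef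
    have hiterG : (∫ z in zmin..zmax, ∫ t : ℝ, (g z t) ^ 2) = Gtot := by
      rw [cv_z (fun z => ∫ t : ℝ, (g z t) ^ 2), hGtotdef]
      exact (integral_prod _ hgsq).symm
    have hσ := shear_mp μ (fun z => |zr - z| / c) hφm
    have hGmp : MemLp (fun p : ℝ × ℝ => g p.1 (p.2 - |zr - p.1| / c)) 2 (μ.prod volume) :=
      hgmp.comp_measurePreserving hσ
    have hHmp : MemLp (fun q : ℝ × ℝ => g q.2 (q.1 - |zr - q.2| / c)) 2 (volume.prod μ) :=
      hGmp.comp_measurePreserving Measure.measurePreserving_swap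
    have hHsq : Integrable (fun q : ℝ × ℝ => (g q.2 (q.1 - |zr - q.2| / c))^2) (volume.prod μ) :=
      hHmp.integrable_sq
    set q : ℝ → ℝ := fun t => ∫ z, (g z (t - |zr - z| / c))^2 ∂μ with hqdef
    have hq_int : Integrable q volume := hHsq.integral_prod_left
    have hq_nonneg : ∀ t, 0 ≤ q t := fun t => integral_nonneg fun z => sq_nonneg _
    have hGeq : ∫ p : ℝ × ℝ, (g p.1 (p.2 - |zr - p.1| / c))^2 ∂(μ.prod volume) = Gtot := by
      have hemb : MeasurableEmbedding (fun p : ℝ × ℝ => (p.1, p.2 - |zr - p.1| / c)) :=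
        (shearEquiv (fun z => |zr - z| / c) hφm).measurableEmbedding
      exact hσ.integral_comp hemb (fun p => (g p.1 p.2)^2)
    have hq_tot : ∫ t, q t ∂volume = Gtot := by
      rw [hqdef]
      have h1 : ∫ t, (∫ z, (g z (t - |zr - z| / c))^2 ∂μ) ∂(volume : Measure ℝ)
          = ∫ p : ℝ × ℝ, (g p.2 (p.1 - |zr - p.2| / c))^2 ∂(volume.prod μ) :=
        (integral_prod _ hHsq).symm
      have h2 : ∫ p : ℝ × ℝ, (g p.2 (p.1 - |zr - p.2| / c))^2 ∂(volume.prod μ)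
          = ∫ p : ℝ × ℝ, (g p.1 (p.2 - |zr - p.1| / c))^2 ∂(μ.prod volume) :=
        integral_prod_swap (fun p : ℝ × ℝ => (g p.1 (p.2 - |zr - p.1| / c))^2)
      rw [h1, h2, hGeq]
    have h_slice_sq : ∀ᵐ t ∂ν, Integrable (fun z => (g z (t - |zr - z| / c))^2) μ :=
      ae_restrict_of_ae hHsq.prod_right_ae
    have hνprodeq : ν.prod μ = (volume.prod μ).restrict (Ioc (0:ℝ) T ×ˢ univ) := by
      rw [← Measure.prod_restrict, Measure.restrict_univ, hνdef]
    have hHres : MemLp (fun q : ℝ × ℝ => g q.2 (q.1 - |zr - q.2| / c)) 2 (ν.prod μ) := by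
      rw [hνprodeq]
      exact hHmp.restrict _
    have hH_int : Integrable (fun q : ℝ × ℝ => g q.2 (q.1 - |zr - q.2| / c)) (ν.prod μ) :=
      hHres.integrable one_le_two
    have hs'_int : Integrable (fun t => ∫ z, g z (t - |zr - z| / c) ∂μ) ν :=
      hH_int.integral_prod_left
    have h_slice1 : ∀ᵐ t ∂ν, Integrable (fun z => g z (t - |zr - z| / c)) μ :=
      hH_int.prod_right_ae
    have h_cs : ∀ᵐ t ∂ν, (∫ z, g z (t - |zr - z| / c) ∂μ)^2 ≤ L * q t := by
      filter_upwards [h_slice1, h_slice_sq] with t h1 h2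
      have hm2 : MemLp (fun z => g z (t - |zr - z| / c)) 2 μ :=
        (memLp_two_iff_integrable_sq h1.aestronglyMeasurable).2 h2
      have := sq_integral_le hm2
      rwa [hLμ] at this
    set sμ : ℝ → ℝ := fun t => (1/(2*c)) * ∫ z, g z (t - |zr - z| / c) ∂μ with hsμdef
    have hsμ_int : Integrable sμ ν := hs'_int.const_mul _
    have hsb : ∀ᵐ t ∂ν, (sμ t)^2 ≤ (L/(4*c^2)) * q t := by
      filter_upwards [h_cs] with t h
      have e1 : (sμ t)^2 = (1/(2*c))^2 * (∫ z, g z (t - |zr - z| / c) ∂μ)^2 := by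
        simp only [hsμdef]; ring
      have e2 : (L/(4*c^2)) * q t = (1/(2*c))^2 * (L * q t) := by ring
      rw [e1, e2]
      exact mul_le_mul_of_nonneg_left h (sq_nonneg _)
    have hq_int_ν : Integrable q ν := by rw [hνdef]; exact hq_int.restrict
    have hsμ_asm : AEStronglyMeasurable sμ ν := hsμ_int.aestronglyMeasurable
    have hsμsq_asm : AEStronglyMeasurable (fun t => (sμ t)^2) ν := by
      exact hsμ_asm.pow 2
    have hsμsq_int : Integrable (fun t => (sμ t)^2) ν := by
      refine Integrable.mono' (hq_int_ν.const_mul (L/(4*c^2))) hsμsq_asm ?_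
      filter_upwards [hsb] with t h
      rw [Real.norm_eq_abs, abs_of_nonneg (sq_nonneg _)]
      exact h
    have hsμ_mp : MemLp sμ 2 ν := (memLp_two_iff_integrable_sq hsμ_asm).2 hsμsq_int
    have hB_le : ∫ t, (sμ t)^2 ∂ν ≤ (L/(4*c^2)) * Gtot := by
      have h1 : ∫ t, (sμ t)^2 ∂ν ≤ ∫ t, (L/(4*c^2)) * q t ∂ν :=
        integral_mono_ae hsμsq_int (hq_int_ν.const_mul _) hsb
      have h2 : ∫ t, (L/(4*c^2)) * q t ∂ν = (L/(4*c^2)) * ∫ t, q t ∂ν := integral_const_mul _ _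
      have h3 : ∫ t, q t ∂ν ≤ ∫ t, q t ∂volume := by
        rw [hνdef]
        exact setIntegral_le_integral hq_int (ae_of_all _ hq_nonneg)
      have h4 : (0:ℝ) ≤ L/(4*c^2) := by positivity
      have h5 := mul_le_mul_of_nonneg_left h3 h4
      rw [hq_tot] at h5
      linarith
    have hrs_int : Integrable (fun t => (r t - sμ t)^2) ν := (hrν.sub hsμ_mp).integrable_sq
    have hr2_int : Integrable (fun t => (r t)^2) ν := hrν.integrable_sq
    have hptwise : ∀ t, 0 ≤ (r t - sμ t)^2 + lam * (sμ t)^2 - u * (r t)^2 := by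
      intro t
      have h1lam : (0:ℝ) < 1 + lam := by linarith
      have hulam0 : lam - u * (1 + lam) = 0 := by rw [hulam]; ring
      have hexp : (1 + lam) * ((r t - sμ t)^2 + lam*(sμ t)^2 - u*(r t)^2)
          = ((1+lam)*sμ t - r t)^2 + (lam - u*(1+lam))*(r t)^2 := by ring
      nlinarith [sq_nonneg ((1+lam)*sμ t - r t), hexp, h1lam, hulam0]
    have hint_nonneg : 0 ≤ ∫ t, ((r t - sμ t)^2 + lam*(sμ t)^2 - u*(r t)^2) ∂ν :=
      integral_nonneg fun t => hptwise t
    have hsplit : ∫ t, ((r t - sμ t)^2 + lam*(sμ t)^2 - u*(r t)^2) ∂ν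
        = (∫ t, (r t - sμ t)^2 ∂ν) + lam * (∫ t, (sμ t)^2 ∂ν) - u * Rν := by
      have e1 : ∫ t, (((r t - sμ t)^2 + lam*(sμ t)^2) - u*(r t)^2) ∂ν
          = (∫ t, ((r t - sμ t)^2 + lam*(sμ t)^2) ∂ν) - ∫ t, u*(r t)^2 ∂ν :=
        integral_sub (hrs_int.add (hsμsq_int.const_mul lam)) (hr2_int.const_mul u)
      have e2 : ∫ t, ((r t - sμ t)^2 + lam*(sμ t)^2) ∂ν
          = (∫ t, (r t - sμ t)^2 ∂ν) + ∫ t, lam*(sμ t)^2 ∂ν :=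
        integral_add hrs_int (hsμsq_int.const_mul lam)
      rw [e1, e2, integral_const_mul, integral_const_mul, ← hRνdef]
    -- first objective term
    have hfirst : (∫ t in (0:ℝ)..T,
        (d t - (1/(2*c)) * w (t - |zs - zr| / c)
          - (1/(2*c)) * ∫ z in zmin..zmax, g z (t - |zr - z| / c)) ^ 2)
        = ∫ t, (r t - sμ t)^2 ∂ν := by
      rw [cv_t (fun t => (d t - (1/(2*c)) * w (t - |zs - zr| / c)
          - (1/(2*c)) * ∫ z in zmin..zmax, g z (t - |zr - z| / c)) ^ 2)]
      refine integral_congr_ae (ae_of_all _ fun t => ?_)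
      simp only [hrdef, hsμdef]
      rw [cv_z (fun z => g z (t - |zr - z| / c))]
    rw [hfirst, hiterG, hR_ex, ← hLdef, ← hudef]
    have h6 := mul_le_mul_of_nonneg_left hB_le hlam_pos.le
    have h7 : lam * ((L/(4*c^2)) * Gtot) = α^2 * Gtot := by rw [← mul_assoc, hlamL]
    rw [h7] at h6
    rw [hsplit] at hint_nonneg
    linarith
  -- Membership: the witness
  have hmem : (4*c^2*α^2 / ((zmax - zmin) + 4*c^2*α^2)) *
          ((1/2) * ∫ t in (0:ℝ)..T, (d t - (1/(2*c)) * w (t - |zs - zr| / c)) ^ 2)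
      ∈ { v : ℝ | ∃ g : ℝ → ℝ → ℝ,
      MemLp (fun p : ℝ × ℝ => g p.1 p.2) 2
        ((volume.restrict (Icc zmin zmax)).prod volume) ∧
      v = (1/2) * ((∫ t in (0:ℝ)..T,
            (d t - (1/(2*c)) * w (t - |zs - zr| / c)
              - (1/(2*c)) * ∫ z in zmin..zmax, g z (t - |zr - z| / c)) ^ 2)
          + α^2 * ∫ z in zmin..zmax, ∫ t : ℝ, (g z t) ^ 2) } := by
    set rt : ℝ → ℝ := (Icc (0:ℝ) T).indicator r with hrtdef
    have hrt : MemLp rt 2 (volume : Measure ℝ) := by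
      rw [hrtdef]
      exact (memLp_indicator_iff_restrict measurableSet_Icc).2 hrIcc
    refine ⟨fun z t => β * rt (t + |zr - z| / c), ?_, ?_⟩
    · -- MemLp of the witness
      rw [← hμdef]
      have hsndmp : MeasurePreserving (fun p : ℝ × ℝ => p.2 + |zr - p.1| / c)
          (μ.prod volume) ((μ univ) • volume) := by
        have h1 := shear_mp_add μ (fun z => |zr - z| / c) hφm
        have h2 : MeasurePreserving (Prod.snd : ℝ × ℝ → ℝ) (μ.prod volume) ((μ univ) • volume) :=
          ⟨measurable_snd, Measure.map_snd_prod⟩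
        exact h2.comp h1
      have hrts : MemLp rt 2 ((μ univ) • volume) := hrt.smul_measure (measure_ne_top μ univ)
      exact (hrts.comp_measurePreserving hsndmp).const_mul β
    · -- value equation
      have hfirstw : (∫ t in (0:ℝ)..T,
          (d t - (1/(2*c)) * w (t - |zs - zr| / c)
            - (1/(2*c)) * ∫ z in zmin..zmax,
                (fun z t => β * rt (t + |zr - z| / c)) z (t - |zr - z| / c)) ^ 2)
          = (1 - β*k)^2 * Rν := by
        rw [cv_t (fun t => (d t - (1/(2*c)) * w (t - |zs - zr| / c)
            - (1/(2*c)) * ∫ z in zmin..zmax,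
                (fun z t => β * rt (t + |zr - z| / c)) z (t - |zr - z| / c)) ^ 2)]
        have hps : ∀ᵐ t ∂ν, (d t - (1/(2*c)) * w (t - |zs - zr| / c)
            - (1/(2*c)) * ∫ z in zmin..zmax,
                (fun z t => β * rt (t + |zr - z| / c)) z (t - |zr - z| / c)) ^ 2
            = (1 - β*k)^2 * (r t)^2 := by
          have hmem_ae : ∀ᵐ t ∂ν, t ∈ Ioc (0:ℝ) T := by
            rw [hνdef]; exact ae_restrict_mem measurableSet_Ioc
          filter_upwards [hmem_ae] with t ht
          have e1 : (∫ z in zmin..zmax,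
              (fun z t => β * rt (t + |zr - z| / c)) z (t - |zr - z| / c))
              = (zmax - zmin) * (β * rt t) := by
            have efun : (fun z => (fun z t => β * rt (t + |zr - z| / c)) z (t - |zr - z| / c))
                = fun _ => β * rt t := by
              funext z
              simp only [sub_add_cancel_right]
              norm_num
            rw [efun, intervalIntegral.integral_const, smul_eq_mul]
          rw [e1]
          have e2 : rt t = r t := by
            rw [hrtdef]
            exact indicator_of_mem (Ioc_subset_Icc_self ht) r
          rw [e2]
          simp only [hrdef, hkdef, hLdef]
          ring
        rw [integral_congr_ae hps, integral_const_mul, hRνdef]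
      have hsecondw : (∫ z in zmin..zmax, ∫ t : ℝ,
          ((fun z t => β * rt (t + |zr - z| / c)) z t) ^ 2)
          = (zmax - zmin) * (β^2 * Rν) := by
        have hin : (fun z => ∫ t : ℝ, ((fun z t => β * rt (t + |zr - z| / c)) z t) ^ 2)
            = fun _ => β^2 * Rν := by
          funext z
          have h1 : (∫ t : ℝ, (β * rt (t + |zr - z| / c)) ^ 2)
              = ∫ t : ℝ, (β * rt t) ^ 2 :=
            integral_add_right_eq_self (fun t => (β * rt t) ^ 2) (|zr - z| / c)
          have h2 : (fun t : ℝ => (β * rt t)^2)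
              = fun t => β^2 * ((Icc (0:ℝ) T).indicator (fun s => (r s)^2) t) := by
            funext t
            rw [hrtdef]
            by_cases ht : t ∈ Icc (0:ℝ) T
            · rw [indicator_of_mem ht, indicator_of_mem ht]; ring
            · rw [indicator_of_notMem ht, indicator_of_notMem ht]; ring
          have h3 : ∫ t in Icc (0:ℝ) T, (r t)^2 = Rν := by
            rw [hRνdef, hνdef, Measure.restrict_congr_set Ioc_ae_eq_Icc]
          simp only []
          rw [h1, h2, integral_const_mul, integral_indicator measurableSet_Icc, h3]
        rw [hin, intervalIntegral.integral_const, smul_eq_mul]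
      rw [hfirstw, hsecondw, hR_ex, ← hLdef, ← hudef]
      have hscal : (1 - β*k)^2 + α^2*(L*β^2) = u := by
        rw [hudef, hβdef, hkdef]
        field_simp
        ring
      rw [← hscal]
      ring
  exact le_antisymm (csInf_le ⟨_, fun v hv => hlow v hv⟩ hmem) (le_csInf ⟨_, hmem⟩ hlow)
end
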